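/- For all real parameters a > 0, b > 1, T > 0, every integer n ≥ 1, and every χ ∈ [s_{n−1}(b,T), s_n(b,T)], the integrated function satisfies G_{a,b,T}(χ) = (−1)^{n−1}·a·T·b^{n−1}·sin((χ − s_{n−1}(b,T))/(b^{n−1}·T)). -/

import Mathlib

open Real Filter Set

/-- Breakpoints `s_n(b,T) = T·π·(b^n − 1)/(b − 1)`. -/
noncomputable def brk (b T : ℝ) (n : ℕ) : ℝ := T * Real.pi * (b ^ n - 1) / (b - 1)

/-- Index of the segment containing `x ≥ 0`: the unique `m` with `s_m ≤ x < s_{m+1}`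
(for `b > 1`, `T > 0`). -/
noncomputable def seg (b T x : ℝ) : ℕ := sInf {n : ℕ | x < brk b T (n + 1)}

/-- The saturated Nussbaum function `N_{a,b,T}`: on `[s_{n−1}, s_n)` (with `m = n − 1`)
it equals `(−1)^m·a·cos((χ − s_m)/(b^m·T))`, extended evenly to `χ < 0`. -/
noncomputable def satN (a b T : ℝ) (χ : ℝ) : ℝ :=
  (-1 : ℝ) ^ (seg b T |χ|) * a *
    Real.cos ((|χ| - brk b T (seg b T |χ|)) / (b ^ (seg b T |χ|) * T))

/-- The integrated function `G_{a,b,T}(χ) = ∫_0^χ N_{a,b,T}(τ) dτ`. -/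
noncomputable def satG (a b T : ℝ) (χ : ℝ) : ℝ := ∫ τ in (0:ℝ)..χ, satN a b T τ

section aux
variable {a b T : ℝ}

lemma brk_zero (b T : ℝ) : brk b T 0 = 0 := by simp [brk]

lemma brk_succ_sub (hb : 1 < b) (m : ℕ) :
    brk b T (m + 1) - brk b T m = T * Real.pi * b ^ m := by
  have hb1 : b - 1 ≠ 0 := by linarith
  rw [brk, brk, div_sub_div_same, div_eq_iff hb1]
  ring

lemma brk_mono (hb : 1 < b) (hT : 0 < T) : StrictMono (brk b T) := by
  apply strictMono_nat_of_lt_succ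
  intro m
  have h := brk_succ_sub (T := T) hb m
  have : 0 < T * Real.pi * b ^ m := by positivity
  linarith

lemma brk_nonneg (hb : 1 < b) (hT : 0 < T) (m : ℕ) : 0 ≤ brk b T m := by
  simpa [brk_zero] using (brk_mono hb hT).monotone (Nat.zero_le m)

lemma seg_eq (hb : 1 < b) (hT : 0 < T) {m : ℕ} {x : ℝ}
    (h1 : brk b T m ≤ x) (h2 : x < brk b T (m + 1)) : seg b T x = m := by
  have hmem : m ∈ {n : ℕ | x < brk b T (n + 1)} := h2
  rw [seg]
  refine le_antisymm (Nat.sInf_le hmem) ?_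
  by_contra h
  push_neg at h
  have hs := Nat.sInf_mem ⟨m, hmem⟩
  have : brk b T (sInf {n : ℕ | x < brk b T (n + 1)} + 1) ≤ brk b T m :=
    (brk_mono hb hT).monotone (by omega)
  exact absurd (lt_of_lt_of_le hs this) (not_lt.2 h1)

lemma satN_eq (hb : 1 < b) (hT : 0 < T) {m : ℕ} {x : ℝ}
    (h1 : brk b T m ≤ x) (h2 : x < brk b T (m + 1)) :
    satN a b T x = (-1 : ℝ) ^ m * a * Real.cos ((x - brk b T m) / (b ^ m * T)) := by
  have hx0 : 0 ≤ x := le_trans (brk_nonneg hb hT m) h1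
  rw [satN, abs_of_nonneg hx0, seg_eq hb hT h1 h2]

lemma cos_hasDeriv (s c x : ℝ) (hc : c ≠ 0) :
    HasDerivAt (fun x => c * Real.sin ((x - s) / c)) (Real.cos ((x - s) / c)) x := by
  have h : HasDerivAt (fun x => (x - s) / c) (1 / c) x := by
    simpa using ((hasDerivAt_id x).sub_const s).div_const c
  have := ((Real.hasDerivAt_sin ((x - s) / c)).comp x h).const_mul c
  simpa [mul_comm, mul_assoc, mul_div_assoc, hc] using this

lemma integrable_piece (ha : 0 < a) (hb : 1 < b) (hT : 0 < T) {m : ℕ} {x y : ℝ}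
    (hxy : x ≤ y) (hx : brk b T m ≤ x) (hy : y ≤ brk b T (m + 1)) :
    IntervalIntegrable (satN a b T) MeasureTheory.volume x y := by
  have hcont : IntervalIntegrable
      (fun τ => (-1 : ℝ) ^ m * a * Real.cos ((τ - brk b T m) / (b ^ m * T)))
      MeasureTheory.volume x y := by
    apply Continuous.intervalIntegrable
    continuity
  refine hcont.congr_ae ?_
  have h0 : ∀ᵐ τ ∂(MeasureTheory.volume : MeasureTheory.Measure ℝ),
      τ ≠ brk b T (m + 1) := by
    rw [MeasureTheory.ae_iff]
    simpa using MeasureTheory.measure_singleton (brk b T (m + 1))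
  have hae : ∀ᵐ τ ∂(MeasureTheory.volume : MeasureTheory.Measure ℝ), τ ∈ Set.uIoc x y →
      (fun τ => (-1 : ℝ) ^ m * a * Real.cos ((τ - brk b T m) / (b ^ m * T))) τ
        = satN a b T τ := by
    filter_upwards [h0] with τ hτ hmem
    rw [Set.uIoc_of_le hxy] at hmem
    have h1 : brk b T m ≤ τ := le_trans hx hmem.1.le
    have h2 : τ < brk b T (m + 1) := lt_of_le_of_ne (le_trans hmem.2 hy) hτ
    rw [satN_eq hb hT h1 h2]
  exact (MeasureTheory.ae_restrict_iff' measurableSet_uIoc).2 hae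

lemma integral_piece (ha : 0 < a) (hb : 1 < b) (hT : 0 < T) {m : ℕ} {χ : ℝ}
    (h1 : brk b T m ≤ χ) (h2 : χ ≤ brk b T (m + 1)) :
    ∫ τ in (brk b T m)..χ, satN a b T τ =
      (-1 : ℝ) ^ m * a * (b ^ m * T) * Real.sin ((χ - brk b T m) / (b ^ m * T)) := by
  set s := brk b T m with hs
  set c := b ^ m * T with hc
  have hcpos : 0 < c := by positivity
  have h0 : ∀ᵐ τ ∂(MeasureTheory.volume : MeasureTheory.Measure ℝ),
      τ ≠ brk b T (m + 1) := by
    rw [MeasureTheory.ae_iff]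
    simpa using MeasureTheory.measure_singleton (brk b T (m + 1))
  have hae : ∀ᵐ τ ∂(MeasureTheory.volume : MeasureTheory.Measure ℝ), τ ∈ Set.uIoc s χ →
      satN a b T τ = (-1 : ℝ) ^ m * a * Real.cos ((τ - s) / c) := by
    filter_upwards [h0] with τ hτ hmem
    rw [Set.uIoc_of_le h1] at hmem
    exact satN_eq hb hT hmem.1.le (lt_of_le_of_ne (le_trans hmem.2 h2) hτ)
  rw [intervalIntegral.integral_congr_ae hae]
  have hderiv : ∀ τ ∈ Set.uIcc s χ,
      HasDerivAt (fun τ => (-1 : ℝ) ^ m * a * (c * Real.sin ((τ - s) / c)))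
        ((-1 : ℝ) ^ m * a * Real.cos ((τ - s) / c)) τ := by
    intro τ _
    exact (cos_hasDeriv s c τ hcpos.ne').const_mul _
  have hint : IntervalIntegrable (fun τ => (-1 : ℝ) ^ m * a * Real.cos ((τ - s) / c))
      MeasureTheory.volume s χ := by
    apply Continuous.intervalIntegrable
    continuity
  rw [intervalIntegral.integral_eq_sub_of_hasDerivAt hderiv hint]
  simp [mul_comm, mul_assoc, mul_left_comm]

lemma satG_brk (ha : 0 < a) (hb : 1 < b) (hT : 0 < T) (m : ℕ) :
    satG a b T (brk b T m) = 0 ∧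
      IntervalIntegrable (satN a b T) MeasureTheory.volume 0 (brk b T m) := by
  induction m with
  | zero => simp [satG, brk_zero]
  | succ m ih =>
    have hle : brk b T m ≤ brk b T (m + 1) := (brk_mono hb hT).monotone (by omega)
    have hint2 : IntervalIntegrable (satN a b T) MeasureTheory.volume
        (brk b T m) (brk b T (m + 1)) := integrable_piece ha hb hT hle le_rfl le_rfl
    have hadd := intervalIntegral.integral_add_adjacent_intervals ih.2 hint2
        (f := satN a b T) (μ := MeasureTheory.volume)
    constructor
    · have hval : ∫ τ in (brk b T m)..(brk b T (m + 1)), satN a b T τ = 0 := by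
        rw [integral_piece ha hb hT hle le_rfl]
        have : (brk b T (m + 1) - brk b T m) / (b ^ m * T) = Real.pi := by
          rw [brk_succ_sub hb]
          field_simp
        rw [this, Real.sin_pi, mul_zero]
      have : satG a b T (brk b T (m + 1)) = satG a b T (brk b T m) +
          ∫ τ in (brk b T m)..(brk b T (m + 1)), satN a b T τ := by
        rw [satG, satG, ← hadd]
      rw [this, ih.1, hval, add_zero]
    · have h0 : (0 : ℝ) = brk b T 0 := (brk_zero b T).symm
      exact ih.2.trans hint2

end aux


/-- explicit formula for `G_{a,b,T}` on `[s_{n−1}, s_n]`, `n ≥ 1`. -/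
theorem satG_formula (a b T : ℝ) (ha : 0 < a) (hb : 1 < b) (hT : 0 < T)
    (n : ℕ) (hn : 1 ≤ n) (χ : ℝ) (hχ : χ ∈ Set.Icc (brk b T (n - 1)) (brk b T n)) :
    satG a b T χ =
      (-1 : ℝ) ^ (n - 1) * a * T * b ^ (n - 1) *
        Real.sin ((χ - brk b T (n - 1)) / (b ^ (n - 1) * T)) := by
  obtain ⟨h1, h2⟩ := hχ
  have hn1 : n - 1 + 1 = n := by omega
  have h2' : χ ≤ brk b T (n - 1 + 1) := by rwa [hn1]
  have hint2 : IntervalIntegrable (satN a b T) MeasureTheory.volume (brk b T (n - 1)) χ :=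
    integrable_piece ha hb hT (le_trans h1 (le_refl χ) |>.trans le_rfl |> fun _ => h1) le_rfl h2'
  have hG := satG_brk ha hb hT (n - 1)
  have hadd := intervalIntegral.integral_add_adjacent_intervals hG.2 hint2
      (f := satN a b T) (μ := MeasureTheory.volume)
  have : satG a b T χ = satG a b T (brk b T (n - 1)) +
      ∫ τ in (brk b T (n - 1))..χ, satN a b T τ := by
    rw [satG, satG, ← hadd]
  rw [this, hG.1, zero_add, integral_piece ha hb hT h1 h2']
  ring
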